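/- Let k₁, k₃ ∈ ℝ and let λ : ℝ → ℝ be twice differentiable with λ'(t) ≠ 0 for all t. Let A, B, C, E, F : ℝ → ℝ be differentiable and let Ã, B̃, C̃, Ẽ, F̃ : ℝ → ℝ be differentiable with, for all t: Ã(λ(t)) = e^{5k₁} A(t)/λ'(t), B̃(λ(t)) = e^{3k₁} B(t)/λ'(t), C̃(λ(t)) = e^{3k₁-k₃} C(t)/λ'(t), Ẽ(λ(t)) = e^{k₁-k₃} E(t)/λ'(t), F̃(λ(t)) = e^{3k₁-k₃} F(t)/λ'(t). Then for every t: A'(t)B(t) − A(t)B'(t) = 0 if and only if Ã'(λ(t))B̃(λ(t)) − Ã(λ(t))B̃'(λ(t)) = 0; A'(t)C(t) − A(t)C'(t) = 0 if and only if Ã'(λ(t))C̃(λ(t)) − Ã(λ(t))C̃'(λ(t)) = 0; A'(t)E(t) − A(t)E'(t) = 0 if and only if Ã'(λ(t))Ẽ(λ(t)) − Ã(λ(t))Ẽ'(λ(t)) = 0; and A'(t)F(t) − A(t)F'(t) = 0 if and only if Ã'(λ(t))F̃(λ(t)) − Ã(λ(t))F̃'(λ(t)) = 0. That is, the equations A_t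 B − A B_t = 0, A_t C − A C_t = 0, A_t E − A E_t = 0, A_t F − A F_t = 0 are invariant equations of the equivalence group of subclass (3). -/

import Mathlib

lemma deriv_transf (c : ℝ) (lam : ℝ → ℝ) (hlam : Differentiable ℝ lam)
    (hlam2 : Differentiable ℝ (deriv lam)) (hlam' : ∀ t, deriv lam t ≠ 0)
    (X Xt : ℝ → ℝ) (hX : Differentiable ℝ X) (hXt : Differentiable ℝ Xt)
    (htr : ∀ t, Xt (lam t) = c * X t / deriv lam t) (t : ℝ) :
    deriv Xt (lam t) =
      c * (deriv X t * deriv lam t - X t * deriv (deriv lam) t) / (deriv lam t) ^ 3 := by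
  have hcomp : deriv (Xt ∘ lam) t = deriv Xt (lam t) * deriv lam t :=
    deriv_comp (x := t) (hXt _) (hlam _)
  have heq : (Xt ∘ lam) = fun s => c * X s / deriv lam s := funext fun s => htr s
  have hrhs : deriv (fun s => c * X s / deriv lam s) t =
      (c * deriv X t * deriv lam t - c * X t * deriv (deriv lam) t) / (deriv lam t) ^ 2 := by
    rw [deriv_fun_div ((hX.const_mul c) _) (hlam2 _) (hlam' t)]
    rw [deriv_const_mul c (hX _)]
  have h : deriv Xt (lam t) * deriv lam t =
      (c * deriv X t * deriv lam t - c * X t * deriv (deriv lam) t) / (deriv lam t) ^ 2 := by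
    rw [← hcomp, heq, hrhs]
  have hne := hlam' t
  field_simp at h ⊢
  linarith [h]

lemma pair_invariant (c d : ℝ) (hc : c ≠ 0) (hd : d ≠ 0)
    (lam : ℝ → ℝ) (hlam : Differentiable ℝ lam)
    (hlam2 : Differentiable ℝ (deriv lam)) (hlam' : ∀ t, deriv lam t ≠ 0)
    (X Y Xt Yt : ℝ → ℝ) (hX : Differentiable ℝ X) (hY : Differentiable ℝ Y)
    (hXt : Differentiable ℝ Xt) (hYt : Differentiable ℝ Yt)
    (htrX : ∀ t, Xt (lam t) = c * X t / deriv lam t)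
    (htrY : ∀ t, Yt (lam t) = d * Y t / deriv lam t) (t : ℝ) :
    deriv X t * Y t - X t * deriv Y t = 0 ↔
      deriv Xt (lam t) * Yt (lam t) - Xt (lam t) * deriv Yt (lam t) = 0 := by
  have hX' := deriv_transf c lam hlam hlam2 hlam' X Xt hX hXt htrX t
  have hY' := deriv_transf d lam hlam hlam2 hlam' Y Yt hY hYt htrY t
  have hne := hlam' t
  have key : deriv Xt (lam t) * Yt (lam t) - Xt (lam t) * deriv Yt (lam t) =
      (c * d / (deriv lam t) ^ 3) * (deriv X t * Y t - X t * deriv Y t) := by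
    rw [hX', hY', htrX t, htrY t]
    field_simp
    ring
  rw [key]
  constructor
  · intro h; rw [h, mul_zero]
  · intro h
    rcases mul_eq_zero.mp h with h1 | h1
    · exact absurd h1 (div_ne_zero (mul_ne_zero hc hd) (pow_ne_zero 3 hne))
    · exact h1

/-- The equations `A_t B − A B_t = 0`, `A_t C − A C_t = 0`, `A_t E − A E_t = 0`,
`A_t F − A F_t = 0` are invariant equations of the equivalence group of the
undamped fifth-order KdV subclass (3). -/
theorem invariant_equations
    (k₁ k₃ : ℝ)
    (lam : ℝ → ℝ) (hlam : Differentiable ℝ lam)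
    (hlam2 : Differentiable ℝ (deriv lam)) (hlam' : ∀ t, deriv lam t ≠ 0)
    (A B C E F : ℝ → ℝ) (hA : Differentiable ℝ A) (hB : Differentiable ℝ B)
    (hC : Differentiable ℝ C) (hE : Differentiable ℝ E) (hF : Differentiable ℝ F)
    (At Bt Ct Et Ft : ℝ → ℝ) (hAt : Differentiable ℝ At) (hBt : Differentiable ℝ Bt)
    (hCt : Differentiable ℝ Ct) (hEt : Differentiable ℝ Et) (hFt : Differentiable ℝ Ft)
    (hAtr : ∀ t, At (lam t) = Real.exp (5 * k₁) * A t / deriv lam t)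
    (hBtr : ∀ t, Bt (lam t) = Real.exp (3 * k₁) * B t / deriv lam t)
    (hCtr : ∀ t, Ct (lam t) = Real.exp (3 * k₁ - k₃) * C t / deriv lam t)
    (hEtr : ∀ t, Et (lam t) = Real.exp (k₁ - k₃) * E t / deriv lam t)
    (hFtr : ∀ t, Ft (lam t) = Real.exp (3 * k₁ - k₃) * F t / deriv lam t) :
    ∀ t,
      (deriv A t * B t - A t * deriv B t = 0
        ↔ deriv At (lam t) * Bt (lam t) - At (lam t) * deriv Bt (lam t) = 0)
      ∧ (deriv A t * C t - A t * deriv C t = 0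
        ↔ deriv At (lam t) * Ct (lam t) - At (lam t) * deriv Ct (lam t) = 0)
      ∧ (deriv A t * E t - A t * deriv E t = 0
        ↔ deriv At (lam t) * Et (lam t) - At (lam t) * deriv Et (lam t) = 0)
      ∧ (deriv A t * F t - A t * deriv F t = 0
        ↔ deriv At (lam t) * Ft (lam t) - At (lam t) * deriv Ft (lam t) = 0) := by
  intro t
  refine ⟨?_, ?_, ?_, ?_⟩
  · exact pair_invariant _ _ (Real.exp_ne_zero _) (Real.exp_ne_zero _) lam hlam hlam2 hlam'
      A B At Bt hA hB hAt hBt hAtr hBtr t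
  · exact pair_invariant _ _ (Real.exp_ne_zero _) (Real.exp_ne_zero _) lam hlam hlam2 hlam'
      A C At Ct hA hC hAt hCt hAtr hCtr t
  · exact pair_invariant _ _ (Real.exp_ne_zero _) (Real.exp_ne_zero _) lam hlam hlam2 hlam'
      A E At Et hA hE hAt hEt hAtr hEtr t
  · exact pair_invariant _ _ (Real.exp_ne_zero _) (Real.exp_ne_zero _) lam hlam hlam2 hlam'
      A F At Ft hA hF hAt hFt hAtr hFtr t
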